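/- Let a, d be complex numbers, let α = (α_i)_{i≥0} be the arithmetical sequence with α_i = a + i·d, and let β = (β_i)_{i≥0} be any sequence with β_0 = a. Define D(n) = det(P_{α,β}(n)) for n ≥ 1 and D(0) = 1. Then for every n ≥ 1, D(n) = Σ_{k=0}^{n-1} (-d)^k · β̂_k · D(n-k-1), where β̂ is the binomial inverse transform of β. -/

import Mathlib

open Matrix

/-- Entry `P_{i,j}` of the generalized Pascal triangle associated to sequences `α`, `β`:
`P_{i,0} = α i`, `P_{0,j} = β j`, and `P_{i,j} = P_{i-1,j} + P_{i,j-1}` for `i, j ≥ 1`. -/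
def pascalEntry {R : Type*} [CommRing R] (α β : ℕ → R) : ℕ → ℕ → R
  | i, 0 => α i
  | 0, j + 1 => β (j + 1)
  | i + 1, j + 1 => pascalEntry α β i (j + 1) + pascalEntry α β (i + 1) j

/-- The generalized Pascal triangle `P_{α,β}(n)`. -/
def genPascal {R : Type*} [CommRing R] (α β : ℕ → R) (n : ℕ) :
    Matrix (Fin n) (Fin n) R :=
  Matrix.of fun i j => pascalEntry α β (i : ℕ) (j : ℕ)

/-- The Töplitz matrix `T_{α,β}(n)`: `t_{i,j} = α_{i-j}` if `i ≥ j`, else `β_{j-i}`. -/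
def toeplitz {R : Type*} [CommRing R] (α β : ℕ → R) (n : ℕ) :
    Matrix (Fin n) (Fin n) R :=
  Matrix.of fun i j => if (j : ℕ) ≤ (i : ℕ) then α ((i : ℕ) - (j : ℕ)) else β ((j : ℕ) - (i : ℕ))

/-- The unipotent lower triangular matrix `L(n)` with `L_{i,j} = C(i,j)` for `i ≥ j`. -/
def lowerL (R : Type*) [CommRing R] (n : ℕ) : Matrix (Fin n) (Fin n) R :=
  Matrix.of fun i j => if (j : ℕ) ≤ (i : ℕ) then ((i : ℕ).choose (j : ℕ) : R) else 0

/-- The binomial inverse transform `α̂_i = ∑_{k=0}^{i} (-1)^{i+k} C(i,k) α_k`. -/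
def hatSeq {R : Type*} [CommRing R] (α : ℕ → R) (i : ℕ) : R :=
  ∑ k ∈ Finset.range (i + 1), (-1 : R) ^ (i + k) * (i.choose k : R) * α k

/-- The binomial transform `α̌_i = ∑_{k=0}^{i} C(i,k) α_k`. -/
def checkSeq {R : Type*} [CommRing R] (α : ℕ → R) (i : ℕ) : R :=
  ∑ k ∈ Finset.range (i + 1), (i.choose k : R) * α k

lemma alt_sum_choose_complex (n : ℕ) :
    ∑ m ∈ Finset.range (n+1), (-1:ℂ)^m * (n.choose m : ℂ) = if n = 0 then 1 else 0 := by
  have h2 := congrArg (fun z : ℤ => (z : ℂ)) (Int.alternating_sum_range_choose (n := n))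
  push_cast at h2
  exact h2

lemma key_alt (i l : ℕ) (hl : l ≤ i) :
    ∑ k ∈ Finset.range (i+1), (-1:ℂ)^k * (i.choose k : ℂ) * (k.choose l : ℂ)
      = if l = i then (-1:ℂ)^i else 0 := by
  rw [Finset.range_eq_Ico, ← Finset.sum_Ico_consecutive _ (Nat.zero_le l) (by omega : l ≤ i+1)]
  have h1 : ∑ k ∈ Finset.Ico 0 l, (-1:ℂ)^k * (i.choose k : ℂ) * (k.choose l : ℂ) = 0 :=
    Finset.sum_eq_zero fun k hk => by
      have : k < l := (Finset.mem_Ico.mp hk).2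
      simp [Nat.choose_eq_zero_of_lt this]
  rw [h1, zero_add, Finset.sum_Ico_eq_sum_range]
  have h2 : ∀ m ∈ Finset.range (i+1-l), (-1:ℂ)^(l+m) * (i.choose (l+m) : ℂ) * ((l+m).choose l : ℂ)
      = ((i.choose l : ℂ) * (-1:ℂ)^l) * ((-1:ℂ)^m * ((i-l).choose m : ℂ)) := by
    intro m hm
    have hm' : l + m ≤ i := by have := Finset.mem_range.mp hm; omega
    have h3 := @Nat.choose_mul i (l+m) l (Nat.le_add_right l m)
    have h4 : l + m - l = m := by omega
    rw [h4] at h3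
    have h5 : (i.choose (l+m) : ℂ) * ((l+m).choose l : ℂ) = (i.choose l : ℂ) * ((i-l).choose m : ℂ) := by
      exact_mod_cast congrArg (Nat.cast : ℕ → ℂ) h3
    rw [pow_add]
    linear_combination ((-1:ℂ)^l * (-1:ℂ)^m) * h5
  rw [Finset.sum_congr rfl h2, ← Finset.mul_sum]
  have h4 : i + 1 - l = (i - l) + 1 := by omega
  rw [h4, alt_sum_choose_complex]
  by_cases hli : l = i
  · subst hli; simp
  · rw [if_neg (by omega), if_neg hli, mul_zero]

lemma check_hat (γ : ℕ → ℂ) (i : ℕ) :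
    ∑ k ∈ Finset.range (i+1), (i.choose k : ℂ) * hatSeq γ k = γ i := by
  have expand : ∀ k ∈ Finset.range (i+1), (i.choose k : ℂ) * hatSeq γ k
      = ∑ l ∈ Finset.range (i+1), (i.choose k : ℂ) * ((-1:ℂ)^(k+l) * (k.choose l : ℂ) * γ l) := by
    intro k hk
    have hk' : k + 1 ≤ i + 1 := by have := Finset.mem_range.mp hk; omega
    rw [hatSeq, Finset.mul_sum]
    refine (Finset.sum_subset (Finset.range_subset_range.2 hk') ?_)
    intro l _ hl
    have h6 : ¬ l < k + 1 := fun c => hl (Finset.mem_range.mpr c)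
    have : k < l := by omega
    simp [Nat.choose_eq_zero_of_lt this]
  rw [Finset.sum_congr rfl expand, Finset.sum_comm]
  have inner : ∀ l ∈ Finset.range (i+1),
      ∑ k ∈ Finset.range (i+1), (i.choose k : ℂ) * ((-1:ℂ)^(k+l) * (k.choose l : ℂ) * γ l)
        = (if l = i then (-1:ℂ)^i else 0) * ((-1:ℂ)^l * γ l) := by
    intro l hl
    have hl' : l ≤ i := by have := Finset.mem_range.mp hl; omega
    rw [← key_alt i l hl', Finset.sum_mul]
    refine Finset.sum_congr rfl fun k _ => ?_
    rw [pow_add]; ring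
  rw [Finset.sum_congr rfl inner]
  rw [Finset.sum_eq_single_of_mem i (Finset.self_mem_range_succ i)
    (fun b _ hb => by rw [if_neg hb, zero_mul])]
  rw [if_pos rfl, ← mul_assoc, ← pow_add]
  simp [Even.neg_one_pow (⟨i, rfl⟩ : Even (i+i))]

def tauC (α β : ℕ → ℂ) (k l : ℕ) : ℂ :=
  if l ≤ k then hatSeq α (k - l) else hatSeq β (l - k)

lemma tau_succ_succ (α β : ℕ → ℂ) (k l : ℕ) :
    tauC α β (k+1) (l+1) = tauC α β k l := by
  simp [tauC, Nat.succ_sub_succ, Nat.succ_le_succ_iff]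

lemma binom_step (i : ℕ) (f : ℕ → ℂ) :
    ∑ k ∈ Finset.range (i+2), ((i+1).choose k : ℂ) * f k
      = ∑ k ∈ Finset.range (i+1), (i.choose k : ℂ) * (f k + f (k+1)) := by
  rw [Finset.sum_range_succ' (fun k => ((i+1).choose k : ℂ) * f k) (i+1)]
  have h1 : ∀ k ∈ Finset.range (i+1), ((i+1).choose (k+1) : ℂ) * f (k+1)
      = (i.choose k : ℂ) * f (k+1) + (i.choose (k+1) : ℂ) * f (k+1) := by
    intro k _
    rw [Nat.choose_succ_succ]
    push_cast
    ring
  rw [Finset.sum_congr rfl h1, Finset.sum_add_distrib, add_assoc]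
  have h2 : (∑ k ∈ Finset.range (i+1), (i.choose (k+1) : ℂ) * f (k+1))
        + ((i+1).choose 0 : ℂ) * f 0
      = ∑ k ∈ Finset.range (i+1), (i.choose k : ℂ) * f k := by
    have h3 := (Finset.sum_range_succ' (fun k => (i.choose k : ℂ) * f k) (i+1)).symm
    simp only [Nat.choose_zero_right, Nat.cast_one, one_mul] at h3 ⊢
    rw [h3, Finset.sum_range_succ, Nat.choose_succ_self]
    simp
  rw [h2, ← Finset.sum_add_distrib]
  exact Finset.sum_congr rfl fun k _ => by ring

noncomputable def QeC (α β : ℕ → ℂ) (i j : ℕ) : ℂ :=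
  ∑ k ∈ Finset.range (i+1), (i.choose k : ℂ)
    * ∑ l ∈ Finset.range (j+1), (j.choose l : ℂ) * tauC α β k l

lemma Qe_step (α β : ℕ → ℂ) (i j : ℕ) :
    QeC α β (i+1) (j+1) = QeC α β i (j+1) + QeC α β (i+1) j := by
  have hg : ∀ k, (∑ l ∈ Finset.range (j+2), ((j+1).choose l : ℂ) * tauC α β k l)
      = ∑ l ∈ Finset.range (j+1), (j.choose l : ℂ) * (tauC α β k l + tauC α β k (l+1)) :=
    fun k => binom_step j (fun l => tauC α β k l)
  rw [QeC, QeC, QeC]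
  rw [binom_step i (fun k => ∑ l ∈ Finset.range (j+2), ((j+1).choose l : ℂ) * tauC α β k l)]
  rw [binom_step i (fun k => ∑ l ∈ Finset.range (j+1), (j.choose l : ℂ) * tauC α β k l)]
  rw [← Finset.sum_add_distrib]
  refine Finset.sum_congr rfl fun k _ => ?_
  rw [hg k, hg (k+1)]
  have hS : ∑ l ∈ Finset.range (j+1), (j.choose l : ℂ) * (tauC α β (k+1) l + tauC α β (k+1) (l+1))
      = ∑ l ∈ Finset.range (j+1), (j.choose l : ℂ) * tauC α β k l
        + ∑ l ∈ Finset.range (j+1), (j.choose l : ℂ) * tauC α β (k+1) l := by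
    rw [← Finset.sum_add_distrib]
    refine Finset.sum_congr rfl fun l _ => ?_
    rw [tau_succ_succ]
    ring
  rw [hS]
  ring

lemma hatSeq_zero (γ : ℕ → ℂ) : hatSeq γ 0 = γ 0 := by simp [hatSeq]

lemma Qe_col (α β : ℕ → ℂ) (i : ℕ) : QeC α β i 0 = α i := by
  have h : ∀ k ∈ Finset.range (i+1),
      (i.choose k : ℂ) * ∑ l ∈ Finset.range 1, ((0:ℕ).choose l : ℂ) * tauC α β k l
        = (i.choose k : ℂ) * hatSeq α k := by
    intro k _
    simp [tauC]
  rw [QeC, Finset.sum_congr rfl h, check_hat]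

lemma Qe_row (α β : ℕ → ℂ) (hβ0 : β 0 = α 0) (j : ℕ) : QeC α β 0 j = β j := by
  rw [QeC]
  simp only [zero_add, Finset.sum_range_one, Nat.choose_self, Nat.cast_one, one_mul, Nat.choose_zero_right]
  have h : ∀ l ∈ Finset.range (j+1),
      (j.choose l : ℂ) * tauC α β 0 l = (j.choose l : ℂ) * hatSeq β l := by
    intro l _
    rcases Nat.eq_zero_or_pos l with rfl | hl
    · simp [tauC, hatSeq_zero, hβ0]
    · rw [tauC, if_neg (by omega), Nat.sub_zero]
  rw [Finset.sum_congr rfl h, check_hat]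

lemma pascal_eq (α β : ℕ → ℂ) (hβ0 : β 0 = α 0) :
    ∀ i j, pascalEntry α β i j = QeC α β i j := by
  intro i
  induction i with
  | zero =>
    intro j
    cases j with
    | zero => rw [pascalEntry, Qe_col]
    | succ j => rw [pascalEntry, Qe_row α β hβ0]
  | succ i ih =>
    intro j
    induction j with
    | zero => rw [pascalEntry, Qe_col]
    | succ j ihj =>
      rw [pascalEntry, ih (j+1), ihj, Qe_step]

lemma fin_ite_sum {n : ℕ} (i : Fin n) (x : ℕ → ℂ) :
    ∑ k : Fin n, (if (k:ℕ) ≤ (i:ℕ) then ((i:ℕ).choose (k:ℕ) : ℂ) else 0) * x (k:ℕ)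
      = ∑ k ∈ Finset.range ((i:ℕ)+1), ((i:ℕ).choose k : ℂ) * x k := by
  rw [Fin.sum_univ_eq_sum_range
    (fun k => (if k ≤ (i:ℕ) then ((i:ℕ).choose k : ℂ) else 0) * x k) n]
  rw [← Finset.sum_subset (Finset.range_subset_range.2 i.isLt) (fun k _ hk => by
    rw [if_neg (by
      have h : ¬ k < (i:ℕ)+1 := fun c => hk (Finset.mem_range.mpr c)
      omega), zero_mul])]
  exact Finset.sum_congr rfl fun k hk =>
    by rw [if_pos (Nat.lt_succ_iff.mp (Finset.mem_range.mp hk))]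

lemma genPascal_factor (α β : ℕ → ℂ) (hβ0 : β 0 = α 0) (n : ℕ) :
    genPascal α β n = lowerL ℂ n * toeplitz (hatSeq α) (hatSeq β) n * (lowerL ℂ n)ᵀ := by
  ext i j
  show pascalEntry α β (i:ℕ) (j:ℕ) = _
  rw [pascal_eq α β hβ0, Matrix.mul_apply]
  have h1 : ∀ l : Fin n,
      (lowerL ℂ n * toeplitz (hatSeq α) (hatSeq β) n) i l * (lowerL ℂ n)ᵀ l j
        = (if (l:ℕ) ≤ (j:ℕ) then ((j:ℕ).choose (l:ℕ) : ℂ) else 0)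
          * (∑ k ∈ Finset.range ((i:ℕ)+1), ((i:ℕ).choose k : ℂ) * tauC α β k (l:ℕ)) := by
    intro l
    rw [Matrix.mul_apply, Matrix.transpose_apply]
    have h2 : ∑ k : Fin n, lowerL ℂ n i k * toeplitz (hatSeq α) (hatSeq β) n k l
        = ∑ k ∈ Finset.range ((i:ℕ)+1), ((i:ℕ).choose k : ℂ) * tauC α β k (l:ℕ) :=
      fin_ite_sum i (fun k => tauC α β k (l:ℕ))
    rw [h2]
    rw [mul_comm]
    rfl
  rw [Finset.sum_congr rfl (fun l _ => h1 l)]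
  rw [fin_ite_sum j
    (fun l => ∑ k ∈ Finset.range ((i:ℕ)+1), ((i:ℕ).choose k : ℂ) * tauC α β k l)]
  rw [QeC]
  simp only [Finset.mul_sum]
  rw [Finset.sum_comm]
  exact Finset.sum_congr rfl fun l _ => Finset.sum_congr rfl fun k _ => by ring

lemma det_lowerL (n : ℕ) : (lowerL ℂ n).det = 1 := by
  have ht : (lowerL ℂ n).BlockTriangular OrderDual.toDual := by
    intro i j h
    have hij : (i:ℕ) < (j:ℕ) := h
    show (if (j:ℕ) ≤ (i:ℕ) then (((i:ℕ)).choose (j:ℕ) : ℂ) else 0) = 0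
    rw [if_neg (by omega)]
  rw [Matrix.det_of_lowerTriangular _ ht]
  have : ∀ i : Fin n, lowerL ℂ n i i = 1 := by
    intro i
    show (if (i:ℕ) ≤ (i:ℕ) then (((i:ℕ)).choose (i:ℕ) : ℂ) else 0) = 1
    rw [if_pos le_rfl, Nat.choose_self, Nat.cast_one]
  rw [Finset.prod_congr rfl fun i _ => this i, Finset.prod_const_one]

lemma det_genPascal_eq (α β : ℕ → ℂ) (hβ0 : β 0 = α 0) (n : ℕ) :
    (genPascal α β n).det = (toeplitz (hatSeq α) (hatSeq β) n).det := by
  rw [genPascal_factor α β hβ0 n, Matrix.det_mul, Matrix.det_mul, Matrix.det_transpose,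
    det_lowerL, one_mul, mul_one]

lemma succAbove_val {n : ℕ} (j : Fin (n+1)) (x : Fin n) :
    ((j.succAbove x : Fin (n+1)) : ℕ) = if (x:ℕ) < (j:ℕ) then (x:ℕ) else (x:ℕ)+1 := by
  rcases lt_or_ge ((x:ℕ)) ((j:ℕ)) with h | h
  · rw [Fin.succAbove_of_castSucc_lt _ _ (by simpa [Fin.lt_def] using h), if_pos h]
    rfl
  · rw [Fin.succAbove_of_le_castSucc _ _ (by simpa [Fin.le_def] using h), if_neg (by omega)]
    rfl

lemma toeplitz_det_rec (u v : ℕ → ℂ) (d : ℂ) (h0 : u 0 = v 0) (h1 : u 1 = d)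
    (h2 : ∀ k, u (k+2) = 0) (n : ℕ) :
    (toeplitz u v (n+1)).det
      = ∑ k ∈ Finset.range (n+1), (-d)^k * v k * (toeplitz u v (n-k)).det := by
  rw [Matrix.det_succ_row_zero]
  rw [← Fin.sum_univ_eq_sum_range (fun k => (-d)^k * v k * (toeplitz u v (n-k)).det) (n+1)]
  refine Finset.sum_congr rfl fun j _ => ?_
  have hjn : (j:ℕ) ≤ n := Nat.lt_succ_iff.mp j.isLt
  set jv := (j : ℕ) with hjvdef
  have ha : toeplitz u v (n+1) 0 j = v jv := by
    show (if (j:ℕ) ≤ ((0 : Fin (n+1)):ℕ) then u (((0 : Fin (n+1)):ℕ) - (j:ℕ))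
      else v ((j:ℕ) - ((0 : Fin (n+1)):ℕ))) = v jv
    simp only [Fin.val_zero]
    rcases Nat.eq_zero_or_pos jv with hj0 | hj0
    · simp [show (j:ℕ) = 0 from hj0, h0, hj0]
    · simp [show ¬ (j:ℕ) ≤ 0 from by omega, hjvdef]
  set e : Fin jv ⊕ Fin (n - jv) ≃ Fin n :=
    finSumFinEquiv.trans (finCongr (by omega)) with hedef
  have hvl : ∀ q : Fin jv, ((e (Sum.inl q)) : ℕ) = (q:ℕ) := fun q => by simp [hedef]
  have hvr : ∀ p : Fin (n - jv), ((e (Sum.inr p)) : ℕ) = jv + (p:ℕ) := fun p => by simp [hedef]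
  set M := (toeplitz u v (n+1)).submatrix Fin.succ j.succAbove with hM
  set M' := M.submatrix e e with hM'
  have hM'll : ∀ (p q : Fin jv), M' (Sum.inl p) (Sum.inl q)
      = if (q:ℕ) ≤ (p:ℕ)+1 then u ((p:ℕ)+1 - (q:ℕ)) else v ((q:ℕ) - ((p:ℕ)+1)) := by
    intro p q
    show toeplitz u v (n+1) (Fin.succ (e (Sum.inl p))) (j.succAbove (e (Sum.inl q))) = _
    have hr : ((Fin.succ (e (Sum.inl p))) : ℕ) = (p:ℕ)+1 := by rw [Fin.val_succ, hvl]
    have hc : ((j.succAbove (e (Sum.inl q))) : ℕ) = (q:ℕ) := by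
      rw [succAbove_val, hvl, if_pos q.isLt]
    simp only [toeplitz, Matrix.of_apply, hr, hc]
  have hM'rl : ∀ (p : Fin (n - jv)) (q : Fin jv), M' (Sum.inr p) (Sum.inl q) = 0 := by
    intro p q
    show toeplitz u v (n+1) (Fin.succ (e (Sum.inr p))) (j.succAbove (e (Sum.inl q))) = 0
    have hr : ((Fin.succ (e (Sum.inr p))) : ℕ) = jv + (p:ℕ) + 1 := by rw [Fin.val_succ, hvr]
    have hc : ((j.succAbove (e (Sum.inl q))) : ℕ) = (q:ℕ) := by
      rw [succAbove_val, hvl, if_pos q.isLt]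
    simp only [toeplitz, Matrix.of_apply, hr, hc]
    have hq : (q:ℕ) < jv := q.isLt
    rw [if_pos (by omega)]
    obtain ⟨k, hk⟩ : ∃ k, jv + (p:ℕ) + 1 - (q:ℕ) = k + 2 := ⟨jv + (p:ℕ) - 1 - (q:ℕ), by omega⟩
    rw [hk, h2]
  have hM'rr : ∀ (p q : Fin (n - jv)), M' (Sum.inr p) (Sum.inr q) = toeplitz u v (n - jv) p q := by
    intro p q
    show toeplitz u v (n+1) (Fin.succ (e (Sum.inr p))) (j.succAbove (e (Sum.inr q))) = _
    have hr : ((Fin.succ (e (Sum.inr p))) : ℕ) = jv + (p:ℕ) + 1 := by rw [Fin.val_succ, hvr]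
    have hc : ((j.succAbove (e (Sum.inr q))) : ℕ) = jv + (q:ℕ) + 1 := by
      rw [succAbove_val, hvr, if_neg (by omega)]
    simp only [toeplitz, Matrix.of_apply, hr, hc]
    rcases le_or_gt (q:ℕ) (p:ℕ) with hqp | hqp
    · rw [if_pos (by omega), if_pos hqp]
      congr 1
      omega
    · rw [if_neg (by omega), if_neg (by omega)]
      congr 1
      omega
  have h21 : M'.toBlocks₂₁ = 0 := by
    ext p q
    exact hM'rl p q
  have h22 : M'.toBlocks₂₂ = toeplitz u v (n - jv) := by
    ext p q
    exact hM'rr p q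
  have hdet11 : M'.toBlocks₁₁.det = d ^ jv := by
    have htri : M'.toBlocks₁₁.BlockTriangular id := by
      intro p q hpq
      have hqp : (q:ℕ) < (p:ℕ) := hpq
      show M' (Sum.inl p) (Sum.inl q) = 0
      rw [hM'll, if_pos (by omega)]
      obtain ⟨k, hk⟩ : ∃ k, (p:ℕ)+1 - (q:ℕ) = k + 2 := ⟨(p:ℕ) - 1 - (q:ℕ), by omega⟩
      rw [hk, h2]
    rw [Matrix.det_of_upperTriangular htri]
    have hdiag : ∀ p : Fin jv, M'.toBlocks₁₁ p p = d := by
      intro p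
      show M' (Sum.inl p) (Sum.inl p) = d
      rw [hM'll, if_pos (by omega)]
      have : (p:ℕ)+1 - (p:ℕ) = 1 := by omega
      rw [this, h1]
    rw [Finset.prod_congr rfl fun p _ => hdiag p, Finset.prod_const, Finset.card_univ,
      Fintype.card_fin]
  have hMdet : M.det = d ^ jv * (toeplitz u v (n - jv)).det := by
    rw [← Matrix.det_submatrix_equiv_self e M, ← hM']
    have hblocks : M' = Matrix.fromBlocks M'.toBlocks₁₁ M'.toBlocks₁₂ 0 (toeplitz u v (n - jv)) := by
      rw [← h21, ← h22, Matrix.fromBlocks_toBlocks]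
    rw [hblocks, Matrix.det_fromBlocks_zero₂₁, hdet11]
  rw [ha, hMdet, neg_pow]
  ring

/-- for the arithmetical sequence `α_i = a + i d` and any `β` with `β_0 = a`,
the determinants `D(n) = det(P_{α,β}(n))`, `D(0) = 1`, satisfy
`D(n) = ∑_{k=0}^{n-1} (-d)^k β̂_k D(n-k-1)`. -/
theorem det_genPascal_arithmetical_rec (a d : ℂ) (β : ℕ → ℂ) (hβ : β 0 = a)
    (D : ℕ → ℂ) (hD0 : D 0 = 1)
    (hD : ∀ m : ℕ, 0 < m → D m = (genPascal (fun i => a + (i : ℂ) * d) β m).det)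
    (n : ℕ) (hn : 1 ≤ n) :
    D n = ∑ k ∈ Finset.range n, (-d) ^ k * hatSeq β k * D (n - k - 1) := by
  obtain ⟨m, rfl⟩ : ∃ m, n = m + 1 := ⟨n - 1, by omega⟩
  set α : ℕ → ℂ := fun i => a + (i:ℂ) * d with hα
  have hβ0 : β 0 = α 0 := by simp [hα, hβ]
  have hu0 : hatSeq α 0 = a := by simp [hatSeq, hα]
  have hu1 : hatSeq α 1 = d := by
    simp [hatSeq, hα, Finset.sum_range_succ]
  have hu2 : ∀ k, hatSeq α (k+2) = 0 := by
    intro k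
    rw [hatSeq]
    have hsplit : ∀ l ∈ Finset.range (k+2+1), (-1:ℂ)^(k+2+l) * ((k+2).choose l : ℂ) * α l
        = (a * (-1:ℂ)^(k+2)) * ((-1:ℂ)^l * ((k+2).choose l : ℂ))
          + (d * (-1:ℂ)^(k+2)) * ((-1:ℂ)^l * (l:ℂ) * ((k+2).choose l : ℂ)) := by
      intro l _
      rw [hα, pow_add]
      ring
    rw [Finset.sum_congr rfl hsplit, Finset.sum_add_distrib, ← Finset.mul_sum, ← Finset.mul_sum]
    have hA : ∑ l ∈ Finset.range (k+2+1), (-1:ℂ)^l * ((k+2).choose l : ℂ) = 0 := by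
      have h := alt_sum_choose_complex (k+2)
      rw [if_neg (by omega)] at h
      exact h
    have hB : ∑ l ∈ Finset.range (k+2+1), (-1:ℂ)^l * (l:ℂ) * ((k+2).choose l : ℂ) = 0 := by
      rw [Finset.sum_range_succ' (fun l => (-1:ℂ)^l * (l:ℂ) * ((k+2).choose l : ℂ)) (k+2)]
      simp only [Nat.cast_zero, mul_zero, zero_mul, add_zero]
      have hterm : ∀ l ∈ Finset.range (k+2),
          (-1:ℂ)^(l+1) * ((l+1 : ℕ):ℂ) * ((k+2).choose (l+1) : ℂ)
            = (-(k:ℂ)-2) * ((-1:ℂ)^l * ((k+1).choose l : ℂ)) := by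
        intro l _
        have h := Nat.add_one_mul_choose_eq (k+1) l
        have hc : ((k:ℂ)+2) * ((k+1).choose l : ℂ) = ((k+2).choose (l+1) : ℂ) * ((l:ℂ)+1) := by
          exact_mod_cast congrArg (Nat.cast : ℕ → ℂ) h
        push_cast
        rw [pow_succ]
        linear_combination ((-1:ℂ)^l) * hc
      rw [Finset.sum_congr rfl hterm, ← Finset.mul_sum]
      have h := alt_sum_choose_complex (k+1)
      rw [if_neg (by omega)] at h
      rw [h, mul_zero]
    rw [hA, hB, mul_zero, mul_zero, add_zero]
  have h0 : hatSeq α 0 = hatSeq β 0 := by rw [hu0, hatSeq_zero β, hβ]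
  have hDE : ∀ m, D m = (toeplitz (hatSeq α) (hatSeq β) m).det := by
    intro m
    rcases Nat.eq_zero_or_pos m with rfl | hm
    · rw [hD0, Matrix.det_fin_zero]
    · rw [hD m hm, det_genPascal_eq α β hβ0]
  rw [hDE (m+1), toeplitz_det_rec (hatSeq α) (hatSeq β) d h0 hu1 hu2 m]
  refine Finset.sum_congr rfl fun k hk => ?_
  have hk' : k ≤ m := by have := Finset.mem_range.mp hk; omega
  have hmk : m + 1 - k - 1 = m - k := by omega
  rw [hmk, hDE (m - k)]
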